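/- Let {g_λ} be a compatible collection of monic polynomials. Say a partition λ has an (i,j)-jump if (i,j) is a removable box of λ (i.e. (i,j) ∈ λ and λ with the box (i,j) removed is again a partition) and g_λ ≠ g_{λ∖(i,j)}. If (i,j) is a removable box of both partitions λ₁ and λ₂, then λ₁ has an (i,j)-jump if and only if λ₂ has an (i,j)-jump. -/

import Mathlib

open Polynomial

/-- `𝒵_n = K[t][Σ_n]`, the group algebra of the symmetric group on `n` letters
over the polynomial ring `K[t]`. -/
abbrev Zn (K : Type) [Field K] (n : ℕ) : Type :=
  MonoidAlgebra (Polynomial K) (Equiv.Perm (Fin n))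

/-- `KΣ_n`, the group algebra of the symmetric group over `K`. -/
abbrev GA (K : Type) [Field K] (n : ℕ) : Type :=
  MonoidAlgebra K (Equiv.Perm (Fin n))

/-- The basis element `[σ]` of `𝒵_n`. -/
noncomputable def zbasis {K : Type} [Field K] {n : ℕ} (σ : Equiv.Perm (Fin n)) : Zn K n :=
  MonoidAlgebra.single σ 1

/-- For `σ ∈ Σ_{n+1}`, the permutation `τ ∈ Σ_n` with `τ (σ⁻¹ n) = σ n` and
`τ k = σ k` for all other `k`; if `σ` fixes the last point this is the
restriction of `σ`. -/
def reduceLast {n : ℕ} (σ : Equiv.Perm (Fin (n + 1))) : Equiv.Perm (Fin n) :=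
  Equiv.removeNone (finSuccEquivLast.permCongr σ)

/-- The contraction `∂ : 𝒵_{n+1} → 𝒵_n`: the `K[t]`-linear map with
`∂[σ] = t·[σ']` if `σ` fixes the last point (`σ'` the restriction) and
`∂[σ] = [reduceLast σ]` otherwise. -/
noncomputable def contractZ {K : Type} [Field K] {n : ℕ} (a : Zn K (n + 1)) : Zn K n :=
  Finsupp.sum a.coeff fun σ f =>
    MonoidAlgebra.single (reduceLast σ)
      ((if σ (Fin.last n) = Fin.last n then (X : Polynomial K) else 1) * f)

/-- `σ ⊕ τ ∈ Σ_{p+q}`: acts as `σ` on the first `p` letters and as the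
shift of `τ` on the last `q` letters. -/
def permShift {p q : ℕ} (σ : Equiv.Perm (Fin p)) (τ : Equiv.Perm (Fin q)) :
    Equiv.Perm (Fin (p + q)) :=
  finSumFinEquiv.permCongr (Equiv.sumCongr σ τ)

/-- The tensor product `⊗ : 𝒵_p × 𝒵_q → 𝒵_{p+q}`, the `K[t]`-bilinear map with
`[σ] ⊗ [τ] = [σ ⊕ τ]`. -/
noncomputable def ztensor {K : Type} [Field K] {p q : ℕ} (a : Zn K p) (b : Zn K q) :
    Zn K (p + q) :=
  Finsupp.sum a.coeff fun σ f => Finsupp.sum b.coeff fun τ g =>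
    MonoidAlgebra.single (permShift σ τ) (f * g)

/-- An ideal of the wheeled PROP `𝒵`: a family `I_n ⊆ 𝒵_n` such that each `I_n` is a
two-sided ideal of the ring `K[t][Σ_n]`, closed under tensoring (on either side) with
arbitrary elements, and closed under contraction. -/
structure ZIdeal (K : Type) [Field K] where
  carrier : ∀ n : ℕ, Set (Zn K n)
  zero_mem : ∀ n : ℕ, (0 : Zn K n) ∈ carrier n
  add_mem : ∀ (n : ℕ) (a b : Zn K n), a ∈ carrier n → b ∈ carrier n → a + b ∈ carrier n
  neg_mem : ∀ (n : ℕ) (a : Zn K n), a ∈ carrier n → -a ∈ carrier n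
  mul_mem_left : ∀ (n : ℕ) (r a : Zn K n), a ∈ carrier n → r * a ∈ carrier n
  mul_mem_right : ∀ (n : ℕ) (r a : Zn K n), a ∈ carrier n → a * r ∈ carrier n
  tensor_mem_left : ∀ (p q : ℕ) (a : Zn K p) (b : Zn K q),
    a ∈ carrier p → ztensor a b ∈ carrier (p + q)
  tensor_mem_right : ∀ (p q : ℕ) (a : Zn K p) (b : Zn K q),
    a ∈ carrier p → ztensor b a ∈ carrier (q + p)
  contract_mem : ∀ (n : ℕ) (a : Zn K (n + 1)), a ∈ carrier (n + 1) → contractZ a ∈ carrier n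

/-- A nonzero ideal of `𝒵`. -/
def ZIdeal.Nonzero {K : Type} [Field K] (I : ZIdeal K) : Prop :=
  ∃ (d : ℕ) (a : Zn K d), a ∈ I.carrier d ∧ a ≠ 0

/-- A standard Young tableau of shape `μ` with entries in `Fin n`:
a bijection from the cells of `μ` to `Fin n` (thought of as the entries `1,…,n`)
that increases along rows and columns.  (Coordinates of cells are 0-indexed,
in matrix convention: `(i, j)` is row `i`, column `j`.) -/
structure SYT (μ : YoungDiagram) (n : ℕ) where
  toEquiv : {c : ℕ × ℕ // c ∈ μ} ≃ Fin n
  row_lt : ∀ c d : {c : ℕ × ℕ // c ∈ μ},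
    c.1.1 = d.1.1 → c.1.2 < d.1.2 → toEquiv c < toEquiv d
  col_lt : ∀ c d : {c : ℕ × ℕ // c ∈ μ},
    c.1.2 = d.1.2 → c.1.1 < d.1.1 → toEquiv c < toEquiv d

/-- `σ` belongs to the row stabilizer `R(T)` of the tableau `T`. -/
def isRowStab {μ : YoungDiagram} {n : ℕ} (T : SYT μ n) (σ : Equiv.Perm (Fin n)) : Prop :=
  ∀ k : Fin n, (T.toEquiv.symm (σ k)).1.1 = (T.toEquiv.symm k).1.1

/-- `σ` belongs to the column stabilizer `C(T)` of the tableau `T`. -/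
def isColStab {μ : YoungDiagram} {n : ℕ} (T : SYT μ n) (σ : Equiv.Perm (Fin n)) : Prop :=
  ∀ k : Fin n, (T.toEquiv.symm (σ k)).1.2 = (T.toEquiv.symm k).1.2

open Classical in
/-- The Young symmetrizer `y_T = Σ_{σ ∈ R(T), π ∈ C(T)} sgn(π)·[π σ]`, with
coefficients in a commutative ring `R`. -/
noncomputable def ySym (R : Type) [CommRing R] {μ : YoungDiagram} {n : ℕ} (T : SYT μ n) :
    MonoidAlgebra R (Equiv.Perm (Fin n)) :=
  ∑ σ : Equiv.Perm (Fin n), ∑ π : Equiv.Perm (Fin n),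
    if isRowStab T σ ∧ isColStab T π then
      MonoidAlgebra.single (π * σ) (((Equiv.Perm.sign π : ℤ) : R))
    else 0

/-- The two-sided span `A·S·A` of a subset `S` of a `K`-algebra `A`,
as a `K`-subspace. -/
noncomputable def twoSidedSpan {K : Type} [Field K] {A : Type} [Ring A] [Algebra K A]
    (S : Set A) : Submodule K A :=
  Submodule.span K {x | ∃ a b : A, ∃ s ∈ S, x = a * s * b}

/-- The simple two-sided ideal `J_λ = KΣ_n · y_T · KΣ_n ⊆ KΣ_n` attached to a
partition (Young diagram) `μ`; it does not depend on the choice of a standard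
Young tableau `T` of shape `μ`, so we take the supremum over all of them. -/
noncomputable def Jideal (K : Type) [Field K] (n : ℕ) (μ : YoungDiagram) :
    Submodule K (GA K n) :=
  ⨆ T : SYT μ n, twoSidedSpan {ySym K T}

/-- The embedding `KΣ_n → K[t][Σ_n]` (coefficientwise `K → K[t]`). -/
noncomputable def embZ (K : Type) [Field K] (n : ℕ) : GA K n →ₗ[K] Zn K n :=
  (MonoidAlgebra.coeffLinearEquiv K).symm.toLinearMap ∘ₗ
    Finsupp.mapRange.linearMap (Algebra.linearMap K (Polynomial K)) ∘ₗ
      (MonoidAlgebra.coeffLinearEquiv K).toLinearMap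

/-- `J_λ`, regarded inside `𝒵_n = K[t][Σ_n]` (as a `K`-subspace). -/
noncomputable def JZ (K : Type) [Field K] (n : ℕ) (μ : YoungDiagram) :
    Submodule K (Zn K n) :=
  Submodule.map (embZ K n) (Jideal K n μ)

/-- `L·J_λ ⊆ 𝒵_n`: the `K`-span of products `f • x` with `f ∈ L ⊆ K[t]`, `x ∈ J_λ`. -/
noncomputable def LJ (K : Type) [Field K] (n : ℕ) (L : Ideal (Polynomial K))
    (μ : YoungDiagram) : Submodule K (Zn K n) :=
  Submodule.span K {x | ∃ f ∈ L, ∃ y ∈ JZ K n μ, x = f • y}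

/-- The partitions of `n`, as Young diagrams with `n` cells. -/
def Par (n : ℕ) : Type := {μ : YoungDiagram // μ.card = n}

/-- `I_n` decomposes as the direct sum `⊕_{λ ⊢ n} L_λ·J_λ`. -/
def IsDecomp (K : Type) [Field K] (n : ℕ) (S : Set (Zn K n))
    (L : Par n → Ideal (Polynomial K)) : Prop :=
  S = ↑(⨆ μ : Par n, LJ K n (L μ) μ.1) ∧ iSupIndep fun μ : Par n => LJ K n (L μ) μ.1

/-- For a monic `f ∈ K[t]` and a finite set `C` of boxes, the polynomial
`g_λ = f · ∏_{(i,j) ∈ C, (i,j) ∉ λ} (t + j − i)`. -/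
noncomputable def gOf (K : Type) [Field K] (f : Polynomial K) (C : Finset (ℕ × ℕ))
    (μ : YoungDiagram) : Polynomial K :=
  f * ∏ c ∈ C.filter (fun c => c ∉ μ), ((X : Polynomial K) + (c.2 : Polynomial K) - (c.1 : Polynomial K))

/-- The `n`-th piece of the ideal `I(f, C)` of `𝒵`:
`I(f,C)_n = ⊕_{λ ⊢ n} (g_λ)·J_λ`. -/
noncomputable def IfcCarrier (K : Type) [Field K] (f : Polynomial K) (C : Finset (ℕ × ℕ))
    (n : ℕ) : Set (Zn K n) :=
  ↑(⨆ μ : Par n, LJ K n (Ideal.span {gOf K f C μ.1}) μ.1)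

/-- A collection of monic polynomials indexed by all partitions is *compatible* if,
whenever `ν` is obtained from `μ` by adding a single box in row `i`, column `j`,
either `g μ = g ν` or `g μ = (t + j − i) · g ν`. -/
def Compatible (K : Type) [Field K] (g : YoungDiagram → Polynomial K) : Prop :=
  (∀ μ : YoungDiagram, (g μ).Monic) ∧
  ∀ (μ ν : YoungDiagram) (i j : ℕ), (i, j) ∉ μ → ν.cells = insert (i, j) μ.cells →
    (g μ = g ν ∨ g μ = ((X : Polynomial K) + (j : Polynomial K) - (i : Polynomial K)) * g ν)


section Stmt8Aux

variable {K : Type} [Field K] [CharZero K]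

lemma memCYD {μ : YoungDiagram} {c : ℕ × ℕ} : c ∈ μ.cells ↔ c ∈ μ := YoungDiagram.mem_cells c

set_option linter.unusedSectionVars false

/-- The linear polynomial attached to a box. -/
noncomputable def pcPoly (K : Type) [Field K] (i j : ℕ) : Polynomial K :=
  X + C ((j : K) - (i : K))

lemma pcPoly_eq (i j : ℕ) :
    (X : Polynomial K) + (j : Polynomial K) - (i : Polynomial K) = pcPoly K i j := by
  rw [pcPoly, map_sub, Polynomial.C_eq_natCast, Polynomial.C_eq_natCast]; ring

lemma pcPoly_monic (i j : ℕ) : (pcPoly K i j).Monic := monic_X_add_C _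

lemma pcPoly_natDegree (i j : ℕ) : (pcPoly K i j).natDegree = 1 := natDegree_X_add_C _

lemma pcPoly_injective (i j i' j' : ℕ) (h : (j : ℤ) - i ≠ (j' : ℤ) - i') :
    pcPoly K i j ≠ pcPoly K i' j' := by
  intro he
  apply h
  have h2 : ((j : K) - i) = ((j' : K) - i') := C_injective (add_left_cancel he)
  have : (((j : ℤ) - i : ℤ) : K) = (((j' : ℤ) - i' : ℤ) : K) := by push_cast; exact h2
  exact_mod_cast this

/-- `c` is a corner (maximal cell) of `μ`. -/
def IsCornerYD (μ : YoungDiagram) (c : ℕ × ℕ) : Prop :=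
  c ∈ μ ∧ ∀ x ∈ μ, c ≤ x → x = c

lemma corner_of_erase {μ ν : YoungDiagram} {c : ℕ × ℕ} (hc : c ∈ μ)
    (h : ν.cells = μ.cells.erase c) : IsCornerYD μ c := by
  refine ⟨hc, fun x hx hcx => ?_⟩
  by_contra hne
  have hxν : x ∈ ν := by
    rw [← memCYD, h, Finset.mem_erase]
    exact ⟨hne, hx⟩
  have hcν : c ∈ ν := ν.isLowerSet hcx hxν
  rw [← memCYD, h, Finset.mem_erase] at hcν
  exact hcν.1 rfl

/-- Erasing a corner gives a Young diagram. -/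
def eraseCorner (μ : YoungDiagram) (c : ℕ × ℕ) (hc : IsCornerYD μ c) : YoungDiagram :=
  ⟨μ.cells.erase c, by
    intro a b hba ha
    rw [Finset.mem_coe, Finset.mem_erase] at ha ⊢
    refine ⟨?_, μ.isLowerSet hba ha.2⟩
    intro hbc
    subst hbc
    exact ha.1 (hc.2 a ha.2 hba)⟩

lemma eraseCorner_cells (μ : YoungDiagram) (c : ℕ × ℕ) (hc : IsCornerYD μ c) :
    (eraseCorner μ c hc).cells = μ.cells.erase c := rfl

lemma corners_content_ne {μ : YoungDiagram} {i j i' j' : ℕ}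
    (h : IsCornerYD μ (i, j)) (h' : IsCornerYD μ (i', j')) (hne : (i, j) ≠ (i', j')) :
    (j : ℤ) - i ≠ (j' : ℤ) - i' := by
  have hle : ¬ ((i, j) ≤ (i', j')) := fun hle => hne (h.2 _ h'.1 hle).symm
  have hle' : ¬ ((i', j') ≤ (i, j)) := fun hle => hne (h'.2 _ h.1 hle)
  rw [Prod.mk_le_mk] at hle hle'
  omega

lemma edge {g : YoungDiagram → Polynomial K} (hg : Compatible K g)
    {lam nu : YoungDiagram} {i j : ℕ} (hmem : (i, j) ∈ lam)
    (hnu : nu.cells = lam.cells.erase (i, j)) :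
    g nu = g lam ∨ g nu = pcPoly K i j * g lam := by
  have h1 : (i, j) ∉ nu := by
    rw [← memCYD, hnu]
    simp
  have h2 : lam.cells = insert (i, j) nu.cells := by
    rw [hnu, Finset.insert_erase (memCYD.2 hmem)]
  rcases hg.2 nu lam i j h1 h2 with h | h
  · exact Or.inl h
  · right; rw [h, pcPoly_eq]

lemma jump_iff {g : YoungDiagram → Polynomial K} (hg : Compatible K g)
    {lam nu : YoungDiagram} {i j : ℕ} (hmem : (i, j) ∈ lam)
    (hnu : nu.cells = lam.cells.erase (i, j)) :
    g lam ≠ g nu ↔ g nu = pcPoly K i j * g lam := by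
  rcases edge hg hmem hnu with h | h
  · simp only [h, ne_eq, not_true_eq_false, false_iff]
    intro he
    have h0 : g lam ≠ 0 := (hg.1 lam).ne_zero
    have : pcPoly K i j = 1 := by
      apply mul_right_cancel₀ h0
      rw [← he, one_mul]
    have := congrArg Polynomial.natDegree this
    rw [pcPoly_natDegree, Polynomial.natDegree_one] at this
    exact one_ne_zero this
  · simp only [h, ne_eq, iff_true]
    intro he
    have h0 : g lam ≠ 0 := (hg.1 lam).ne_zero
    have : (1 : Polynomial K) = pcPoly K i j := mul_right_cancel₀ h0 (by rw [one_mul, ← he])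
    have := congrArg Polynomial.natDegree this
    rw [pcPoly_natDegree, Polynomial.natDegree_one] at this
    exact one_ne_zero this.symm

/-- The square lemma: removing another corner preserves the jump status. -/
lemma square {g : YoungDiagram → Polynomial K} (hg : Compatible K g)
    {lam nu lam' nu' : YoungDiagram} {i j i' j' : ℕ}
    (h1 : (i, j) ∈ lam) (h2 : (i', j') ∈ lam) (hne : (i, j) ≠ (i', j'))
    (hnu : nu.cells = lam.cells.erase (i, j))
    (hlam' : lam'.cells = lam.cells.erase (i', j'))
    (hnu' : nu'.cells = lam'.cells.erase (i, j)) :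
    (g lam ≠ g nu ↔ g lam' ≠ g nu') := by
  have hc1 : IsCornerYD lam (i, j) := corner_of_erase h1 hnu
  have hc2 : IsCornerYD lam (i', j') := corner_of_erase h2 hlam'
  have hcontent := corners_content_ne hc1 hc2 hne
  set p := pcPoly K i j with hp
  set q := pcPoly K i' j' with hq
  have hpq : p ≠ q := pcPoly_injective _ _ _ _ hcontent
  have h0 : g lam ≠ 0 := (hg.1 lam).ne_zero
  have hijlam' : (i, j) ∈ lam' := by
    rw [← memCYD, hlam', Finset.mem_erase]
    exact ⟨hne, memCYD.2 h1⟩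
  have hijnu : (i', j') ∈ nu := by
    rw [← memCYD, hnu, Finset.mem_erase]
    exact ⟨fun hh => hne hh.symm, memCYD.2 h2⟩
  have hnu'2 : nu'.cells = nu.cells.erase (i', j') := by
    rw [hnu', hlam', hnu]
    ext x; simp only [Finset.mem_erase]; tauto
  have e3 : g lam' = g lam ∨ g lam' = q * g lam := edge hg h2 hlam'
  have e4 : g nu' = g nu ∨ g nu' = q * g nu := edge hg hijnu hnu'2
  rw [jump_iff hg h1 hnu, jump_iff hg hijlam' hnu']
  have hdp : p.natDegree = 1 := pcPoly_natDegree _ _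
  have hdq : q.natDegree = 1 := pcPoly_natDegree _ _
  have hq0 : q ≠ 0 := (pcPoly_monic _ _).ne_zero
  have hp0 : p ≠ 0 := (pcPoly_monic _ _).ne_zero
  -- the four impossible equalities
  have imp1 : p * g lam ≠ g lam := by
    intro he
    have : p = 1 := mul_right_cancel₀ h0 (by rw [he, one_mul])
    have := congrArg Polynomial.natDegree this
    simp [hdp] at this
  have imp2 : p * g lam ≠ q * g lam := fun he => hpq (mul_right_cancel₀ h0 he)
  have imp3 : q * (p * g lam) ≠ g lam := by
    intro he
    have : q * p = 1 := mul_right_cancel₀ h0 (by rw [mul_assoc, he, one_mul])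
    have := congrArg Polynomial.natDegree this
    rw [Polynomial.natDegree_mul hq0 hp0, hdp, hdq, Polynomial.natDegree_one] at this
    omega
  have imp4 : q * (p * g lam) ≠ q * g lam := by
    intro he
    have : p * g lam = g lam := mul_left_cancel₀ hq0 he
    exact imp1 this
  constructor
  · intro hA
    rcases edge hg hijlam' hnu' with h | h
    · exfalso
      rcases e3 with h3 | h3 <;> rcases e4 with h4 | h4
      · exact imp1 (by linear_combination -hA - h4 + h + h3)
      · exact imp3 (by linear_combination -q * hA - h4 + h + h3)
      · exact imp2 (by linear_combination -hA - h4 + h + h3)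
      · exact imp4 (by linear_combination -q * hA - h4 + h + h3)
    · exact h
  · intro hA
    rcases edge hg h1 hnu with h | h
    · exfalso
      rcases e3 with h3 | h3 <;> rcases e4 with h4 | h4
      · exact imp1 (by linear_combination -p * h3 - hA + h4 + h)
      · exact imp2 (by linear_combination -p * h3 - hA + h4 + q * h)
      · exact imp3 (by linear_combination -p * h3 - hA + h4 + h)
      · exact imp4 (by linear_combination -p * h3 - hA + h4 + q * h)
    · exact h

/-- The rectangle with corner `(i,j)`. -/
def rectYD (i j : ℕ) : YoungDiagram :=
  ⟨Finset.range (i + 1) ×ˢ Finset.range (j + 1), by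
    intro a b hba ha
    rw [Finset.mem_coe, Finset.mem_product, Finset.mem_range, Finset.mem_range] at ha ⊢
    exact ⟨lt_of_le_of_lt hba.1 ha.1, lt_of_le_of_lt hba.2 ha.2⟩⟩

lemma mem_rectYD {i j a b : ℕ} : (a, b) ∈ rectYD i j ↔ a ≤ i ∧ b ≤ j := by
  show (a, b) ∈ Finset.range (i+1) ×ˢ Finset.range (j+1) ↔ _
  simp [Finset.mem_product, Nat.lt_succ_iff]

lemma rectYD_corner (i j : ℕ) : IsCornerYD (rectYD i j) (i, j) := by
  constructor
  · exact mem_rectYD.2 ⟨le_refl _, le_refl _⟩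
  · rintro ⟨a, b⟩ hx hle
    rw [Prod.mk_le_mk] at hle
    have := mem_rectYD.1 hx
    have : a = i ∧ b = j := ⟨le_antisymm this.1 hle.1, le_antisymm this.2 hle.2⟩
    simp [this.1, this.2]

lemma rect_subset {lam : YoungDiagram} {i j : ℕ} (h : (i, j) ∈ lam) :
    (rectYD i j).cells ⊆ lam.cells := by
  rintro ⟨a, b⟩ hx
  rw [memCYD] at hx ⊢
  have hab := mem_rectYD.1 hx
  exact lam.isLowerSet (Prod.mk_le_mk.2 hab) h

/-- Main induction: jump status relative to the rectangle. -/
lemma jump_iff_rect {g : YoungDiagram → Polynomial K} (hg : Compatible K g) (i j : ℕ) :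
    ∀ (N : ℕ) (lam nu : YoungDiagram), lam.cells.card = N → (i, j) ∈ lam →
      nu.cells = lam.cells.erase (i, j) →
      (g lam ≠ g nu ↔
        g (rectYD i j) ≠ g (eraseCorner (rectYD i j) (i, j) (rectYD_corner i j))) := by
  intro N
  induction N using Nat.strong_induction_on with
  | _ N ih =>
    intro lam nu hcard hmem hnu
    by_cases hR : lam = rectYD i j
    · subst hR
      have : nu = eraseCorner (rectYD i j) (i, j) (rectYD_corner i j) :=
        YoungDiagram.ext (by rw [hnu, eraseCorner_cells])
      rw [this]
    · -- find another corner
      have hsub : (rectYD i j).cells ⊆ lam.cells := rect_subset hmem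
      have hne : lam.cells ≠ (rectYD i j).cells := fun h => hR (YoungDiagram.ext h)
      have hssub : (rectYD i j).cells ⊂ lam.cells := hsub.ssubset_of_ne (Ne.symm hne)
      obtain ⟨c, hcl, hcr⟩ := Finset.exists_of_ssubset hssub
      have hset : (lam.cells.filter (fun x => c ≤ x)).Nonempty :=
        ⟨c, Finset.mem_filter.2 ⟨hcl, le_refl c⟩⟩
      obtain ⟨m, hmM⟩ := Finset.exists_maximal hset
      have hm : m ∈ lam.cells.filter (fun x => c ≤ x) := hmM.prop
      have hmax : ∀ x ∈ lam.cells.filter (fun x => c ≤ x), ¬ m < x :=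
        fun x hx hlt => lt_irrefl _ (lt_of_lt_of_le hlt (hmM.2 hx hlt.le))
      rw [Finset.mem_filter] at hm
      have hmcorner : IsCornerYD lam m := by
        refine ⟨memCYD.1 hm.1, fun x hx hmx => ?_⟩
        by_contra hxm
        exact hmax x (Finset.mem_filter.2 ⟨memCYD.2 hx, le_trans hm.2 hmx⟩)
          (lt_of_le_of_ne hmx (Ne.symm hxm))
      have hmij : m ≠ (i, j) := by
        intro h
        apply hcr
        rcases c with ⟨a, b⟩
        have : (a, b) ≤ (i, j) := h ▸ hm.2
        rw [Prod.mk_le_mk] at this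
        exact memCYD.2 (mem_rectYD.2 this)
      obtain ⟨i', j'⟩ := m
      set lam' := eraseCorner lam (i', j') hmcorner with hlam'def
      have hlam' : lam'.cells = lam.cells.erase (i', j') := rfl
      have hijlam' : (i, j) ∈ lam' := by
        rw [← memCYD, hlam', Finset.mem_erase]
        exact ⟨fun h => hmij (by rw [h]), memCYD.2 hmem⟩
      have hijcorner' : IsCornerYD lam' (i, j) := by
        have hc1 : IsCornerYD lam (i, j) := corner_of_erase hmem hnu
        refine ⟨hijlam', fun x hx hle => ?_⟩
        have : x ∈ lam := by
          rw [← memCYD, hlam', Finset.mem_erase] at hx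
          exact memCYD.1 hx.2
        exact hc1.2 x this hle
      set nu' := eraseCorner lam' (i, j) hijcorner' with hnu'def
      have hnu' : nu'.cells = lam'.cells.erase (i, j) := rfl
      have hsq := square hg hmem hmcorner.1 (fun h => hmij h.symm) hnu hlam' hnu'
      rw [hsq]
      have hcard' : lam'.cells.card < N := by
        rw [hlam', Finset.card_erase_of_mem (memCYD.2 hmcorner.1), ← hcard]
        have : 0 < lam.cells.card := Finset.card_pos.2 ⟨_, memCYD.2 hmem⟩
        omega
      exact ih _ hcard' lam' nu' rfl hijlam' hnu'

end Stmt8Aux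

theorem stmt8 (K : Type) [Field K] [CharZero K] (g : YoungDiagram → Polynomial K)
    (hg : Compatible K g) (lam1 lam2 nu1 nu2 : YoungDiagram) (i j : ℕ)
    (h1 : (i, j) ∈ lam1) (h2 : (i, j) ∈ lam2)
    (hn1 : nu1.cells = lam1.cells.erase (i, j))
    (hn2 : nu2.cells = lam2.cells.erase (i, j)) :
    (g lam1 ≠ g nu1 ↔ g lam2 ≠ g nu2) := by
  rw [jump_iff_rect hg i j lam1.cells.card lam1 nu1 rfl h1 hn1,
    jump_iff_rect hg i j lam2.cells.card lam2 nu2 rfl h2 hn2]
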